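/- Let λ > 0, t ∈ ℕ, 𝒲 ⊆ [t−1], and for each s ∈ [t−1]\𝒲 let S_s be a finite assortment with feature vectors x_{si} ∈ ℝ^d, and let w_{s+1}, w* ∈ ℝ^d satisfy max_{i∈S_s} |x_{si}ᵀ(w_{s+1} − w*)| ≤ 1/(3√2). Define H_t = λ I_d + Σ_{s∈[t−1]\𝒲} ∇²ℓ_s(w_{s+1}) and H_t(w*) = (λ/e) I_d + Σ_{s∈[t−1]\𝒲} ∇²ℓ_s(w*), where ∇²ℓ_s(v) denotes the Hessian of the MNL loss for assortment S_s at parameter v. Then (1/e) H_t(w*) ⪯ H_t ⪯ e H_t(w*), where A ⪯ B means B − A is positive semidefinite. -/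

import Mathlib

open Matrix

noncomputable section

/-- MNL choice probability of item `i ∈ S`. -/
def mnlProb {d : ℕ} {ι : Type*} (S : Finset ι) (x : ι → Fin d → ℝ)
    (w : Fin d → ℝ) (i : ι) : ℝ :=
  Real.exp (x i ⬝ᵥ w) / (1 + ∑ j ∈ S, Real.exp (x j ⬝ᵥ w))

/-- Hessian of the MNL loss:
`∇²ℓ(w) = Σ_{i∈S} p(i|S,w) xᵢxᵢᵀ − (Σ_{i∈S} p(i|S,w) xᵢ)(Σ_{j∈S} p(j|S,w) xⱼ)ᵀ`. -/
def mnlHess {d : ℕ} {ι : Type*} (S : Finset ι) (x : ι → Fin d → ℝ)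
    (w : Fin d → ℝ) : Matrix (Fin d) (Fin d) ℝ :=
  (∑ i ∈ S, mnlProb S x w i • vecMulVec (x i) (x i))
    - vecMulVec (∑ i ∈ S, mnlProb S x w i • x i) (∑ i ∈ S, mnlProb S x w i • x i)

end

lemma dot_vecMulVec {d : ℕ} (a b v : Fin d → ℝ) :
    v ⬝ᵥ (vecMulVec a b) *ᵥ v = (a ⬝ᵥ v) * (b ⬝ᵥ v) := by
  simp only [dotProduct, mulVec, vecMulVec_apply, Finset.mul_sum, Finset.sum_mul]
  rw [Finset.sum_comm]
  exact Finset.sum_congr rfl fun i _ => Finset.sum_congr rfl fun j _ => by ring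

lemma sumMulVec {d : ℕ} {ι : Type*} (S : Finset ι) (A : ι → Matrix (Fin d) (Fin d) ℝ) (v : Fin d → ℝ) :
    (∑ i ∈ S, A i) *ᵥ v = ∑ i ∈ S, (A i) *ᵥ v := by
  ext j; simp [mulVec, dotProduct, Matrix.sum_apply, Finset.sum_mul]
  rw [Finset.sum_comm]

lemma sumDot {d : ℕ} {ι : Type*} (S : Finset ι) (f : ι → Fin d → ℝ) (v : Fin d → ℝ) :
    (∑ i ∈ S, f i) ⬝ᵥ v = ∑ i ∈ S, (f i) ⬝ᵥ v := by
  simp [dotProduct, Finset.sum_apply, Finset.sum_mul]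
  rw [Finset.sum_comm]

lemma dotSum {d : ℕ} {ι : Type*} (S : Finset ι) (f : ι → Fin d → ℝ) (v : Fin d → ℝ) :
    v ⬝ᵥ (∑ i ∈ S, f i) = ∑ i ∈ S, v ⬝ᵥ (f i) := by
  simp [dotProduct, Finset.sum_apply, Finset.mul_sum]
  rw [Finset.sum_comm]

lemma mnlHess_quad {d : ℕ} {ι : Type*} (S : Finset ι) (x : ι → Fin d → ℝ)
    (w : Fin d → ℝ) (v : Fin d → ℝ) :
    v ⬝ᵥ (mnlHess S x w) *ᵥ v
      = (∑ i ∈ S, mnlProb S x w i * (x i ⬝ᵥ v)^2)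
        - (∑ i ∈ S, mnlProb S x w i * (x i ⬝ᵥ v))^2 := by
  unfold mnlHess
  rw [sub_mulVec, dotProduct_sub, dot_vecMulVec]
  congr 1
  · rw [sumMulVec, dotSum]
    refine Finset.sum_congr rfl fun i _ => ?_
    rw [smul_mulVec, dotProduct_smul, dot_vecMulVec]
    simp only [smul_eq_mul]; ring
  · rw [sumDot, Finset.sum_congr rfl fun i _ => smul_dotProduct (mnlProb S x w i) (x i) v]
    simp only [smul_eq_mul, sq]

lemma mnlHess_isHermitian {d : ℕ} {ι : Type*} (S : Finset ι) (x : ι → Fin d → ℝ)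
    (w : Fin d → ℝ) : (mnlHess S x w).IsHermitian := by
  unfold Matrix.IsHermitian
  unfold mnlHess
  ext i j
  simp [conjTranspose_apply, Matrix.sub_apply, Matrix.sum_apply, vecMulVec_apply,
    Matrix.smul_apply, smul_eq_mul, mul_comm]

lemma Z_pos {d : ℕ} {ι : Type*} (S : Finset ι) (x : ι → Fin d → ℝ) (w : Fin d → ℝ) :
    0 < 1 + ∑ j ∈ S, Real.exp (x j ⬝ᵥ w) := by
  positivity

lemma mnlProb_nonneg {d : ℕ} {ι : Type*} (S : Finset ι) (x : ι → Fin d → ℝ)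
    (w : Fin d → ℝ) (i : ι) : 0 ≤ mnlProb S x w i :=
  div_nonneg (Real.exp_nonneg _) (Z_pos S x w).le

lemma one_sub_sum_mnlProb {d : ℕ} {ι : Type*} (S : Finset ι) (x : ι → Fin d → ℝ)
    (w : Fin d → ℝ) :
    1 - ∑ i ∈ S, mnlProb S x w i = 1 / (1 + ∑ j ∈ S, Real.exp (x j ⬝ᵥ w)) := by
  have hZ := Z_pos S x w
  unfold mnlProb
  rw [← Finset.sum_div]
  field_simp
  ring

lemma sum_mnlProb_le_one {d : ℕ} {ι : Type*} (S : Finset ι) (x : ι → Fin d → ℝ)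
    (w : Fin d → ℝ) : ∑ i ∈ S, mnlProb S x w i ≤ 1 := by
  have h := one_sub_sum_mnlProb S x w
  have hZ := Z_pos S x w
  nlinarith [one_div_pos.mpr hZ]

lemma mnlProb_ratio {d : ℕ} {ι : Type*} (S : Finset ι) (x : ι → Fin d → ℝ)
    (w1 w2 : Fin d → ℝ) (h : ∀ i ∈ S, |x i ⬝ᵥ w1 - x i ⬝ᵥ w2| ≤ 1/4) :
    (∀ i ∈ S, mnlProb S x w1 i ≤ Real.exp (1/2) * mnlProb S x w2 i) ∧
    1 - ∑ i ∈ S, mnlProb S x w1 i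
      ≤ Real.exp (1/2) * (1 - ∑ i ∈ S, mnlProb S x w2 i) := by
  set Z1 := 1 + ∑ j ∈ S, Real.exp (x j ⬝ᵥ w1) with hZ1def
  set Z2 := 1 + ∑ j ∈ S, Real.exp (x j ⬝ᵥ w2) with hZ2def
  have hZ1 : 0 < Z1 := Z_pos S x w1
  have hZ2 : 0 < Z2 := Z_pos S x w2
  have hexp14 : (1:ℝ) ≤ Real.exp (1/4) := by
    rw [Real.one_le_exp_iff]; norm_num
  have hZ : Z2 ≤ Real.exp (1/4) * Z1 := by
    have : ∀ i ∈ S, Real.exp (x i ⬝ᵥ w2) ≤ Real.exp (1/4) * Real.exp (x i ⬝ᵥ w1) := by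
      intro i hi
      rw [← Real.exp_add]
      apply Real.exp_le_exp.mpr
      have := abs_le.mp (h i hi); linarith
    calc Z2 = 1 + ∑ j ∈ S, Real.exp (x j ⬝ᵥ w2) := hZ2def
      _ ≤ Real.exp (1/4) + ∑ j ∈ S, Real.exp (1/4) * Real.exp (x j ⬝ᵥ w1) :=
          add_le_add hexp14 (Finset.sum_le_sum this)
      _ = Real.exp (1/4) * Z1 := by rw [hZ1def, mul_add, mul_one, Finset.mul_sum]
  have hinv : 1 / Z1 ≤ Real.exp (1/4) / Z2 := by
    rw [div_le_div_iff₀ hZ1 hZ2]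
    nlinarith
  constructor
  · intro i hi
    have habs := abs_le.mp (h i hi)
    have h1 : Real.exp (x i ⬝ᵥ w1) ≤ Real.exp (1/4) * Real.exp (x i ⬝ᵥ w2) := by
      rw [← Real.exp_add]; apply Real.exp_le_exp.mpr; linarith
    have hE : Real.exp (1/4) * Real.exp (1/4) = Real.exp (1/2) := by
      rw [← Real.exp_add]; norm_num
    unfold mnlProb
    rw [← hZ1def, ← hZ2def, div_le_iff₀ hZ1,
      show Real.exp (1/2) * (Real.exp (x i ⬝ᵥ w2)/Z2) * Z1
        = (Real.exp (1/2) * Real.exp (x i ⬝ᵥ w2) * Z1)/Z2 by ring,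
      le_div_iff₀ hZ2]
    have hmul := mul_le_mul h1 hZ hZ2.le (by positivity)
    have heq : Real.exp (1/4) * Real.exp (x i ⬝ᵥ w2) * (Real.exp (1/4) * Z1)
        = Real.exp (1/2) * Real.exp (x i ⬝ᵥ w2) * Z1 := by rw [← hE]; ring
    linarith
  · rw [one_sub_sum_mnlProb, one_sub_sum_mnlProb, ← hZ1def, ← hZ2def]
    calc 1 / Z1 ≤ Real.exp (1/4) / Z2 := hinv
      _ ≤ Real.exp (1/2) * (1 / Z2) := by
          rw [div_eq_mul_one_div]
          apply mul_le_mul_of_nonneg_right _ (by positivity)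
          apply Real.exp_le_exp.mpr; norm_num

lemma Q_decomp {ι : Type*} (S : Finset ι) (p z : ι → ℝ) :
    (∑ i ∈ S, p i * (z i)^2) - (∑ i ∈ S, p i * z i)^2
    = (1 - ∑ i ∈ S, p i) * ∑ i ∈ S, p i * (z i)^2
      + (1/2) * ∑ i ∈ S, ∑ j ∈ S, (p i * p j) * (z i - z j)^2 := by
  have h1 : ∑ i ∈ S, ∑ j ∈ S, (p i * p j) * (z i - z j)^2
      = 2 * ((∑ i ∈ S, p i) * (∑ i ∈ S, p i * (z i)^2) - (∑ i ∈ S, p i * z i)^2) := by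
    have e1 : ∀ i ∈ S, ∀ j ∈ S, (p i * p j) * (z i - z j)^2
        = (p i * (z i)^2) * p j - 2 * ((p i * z i) * (p j * z j)) + p i * (p j * (z j)^2) := by
      intros; ring
    rw [Finset.sum_congr rfl fun i hi => Finset.sum_congr rfl fun j hj => e1 i hi j hj]
    simp only [Finset.sum_add_distrib, Finset.sum_sub_distrib, ← Finset.sum_mul,
      ← Finset.mul_sum]
    ring
  linarith

lemma Q_le {ι : Type*} (S : Finset ι) (p q z : ι → ℝ) (r : ℝ) (hr : 0 ≤ r)
    (hp : ∀ i ∈ S, 0 ≤ p i) (hq : ∀ i ∈ S, 0 ≤ q i)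
    (hq1 : ∑ i ∈ S, q i ≤ 1)
    (hpq : ∀ i ∈ S, p i ≤ r * q i)
    (hpq0 : 1 - ∑ i ∈ S, p i ≤ r * (1 - ∑ i ∈ S, q i)) :
    (∑ i ∈ S, p i * (z i)^2) - (∑ i ∈ S, p i * z i)^2
      ≤ r^2 * ((∑ i ∈ S, q i * (z i)^2) - (∑ i ∈ S, q i * z i)^2) := by
  rw [Q_decomp, Q_decomp]
  have hqz : 0 ≤ ∑ i ∈ S, q i * (z i)^2 :=
    Finset.sum_nonneg fun i hi => mul_nonneg (hq i hi) (sq_nonneg _)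
  have hpz : ∑ i ∈ S, p i * (z i)^2 ≤ r * ∑ i ∈ S, q i * (z i)^2 := by
    rw [Finset.mul_sum]
    exact Finset.sum_le_sum fun i hi => by
      have := mul_le_mul_of_nonneg_right (hpq i hi) (sq_nonneg (z i))
      linarith
  have hq0 : 0 ≤ 1 - ∑ i ∈ S, q i := by linarith
  have t1 : (1 - ∑ i ∈ S, p i) * ∑ i ∈ S, p i * (z i)^2
      ≤ r^2 * ((1 - ∑ i ∈ S, q i) * ∑ i ∈ S, q i * (z i)^2) := by
    have hp0 : 0 ≤ ∑ i ∈ S, p i * (z i)^2 :=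
      Finset.sum_nonneg fun i hi => mul_nonneg (hp i hi) (sq_nonneg _)
    calc (1 - ∑ i ∈ S, p i) * ∑ i ∈ S, p i * (z i)^2
        ≤ (r * (1 - ∑ i ∈ S, q i)) * ∑ i ∈ S, p i * (z i)^2 :=
          mul_le_mul_of_nonneg_right hpq0 hp0
      _ ≤ (r * (1 - ∑ i ∈ S, q i)) * (r * ∑ i ∈ S, q i * (z i)^2) :=
          mul_le_mul_of_nonneg_left hpz (mul_nonneg hr hq0)
      _ = r^2 * ((1 - ∑ i ∈ S, q i) * ∑ i ∈ S, q i * (z i)^2) := by ring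
  have t2 : ∑ i ∈ S, ∑ j ∈ S, (p i * p j) * (z i - z j)^2
      ≤ r^2 * ∑ i ∈ S, ∑ j ∈ S, (q i * q j) * (z i - z j)^2 := by
    rw [Finset.mul_sum]
    refine Finset.sum_le_sum fun i hi => ?_
    rw [Finset.mul_sum]
    refine Finset.sum_le_sum fun j hj => ?_
    have h1 : p i * p j ≤ r^2 * (q i * q j) := by
      have := mul_le_mul (hpq i hi) (hpq j hj) (hp j hj) (mul_nonneg hr (hq i hi))
      nlinarith
    exact by nlinarith [sq_nonneg (z i - z j), mul_le_mul_of_nonneg_right h1 (sq_nonneg (z i - z j))]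
  linarith

lemma mnlHess_quad_le {d : ℕ} {ι : Type*} (S : Finset ι) (x : ι → Fin d → ℝ)
    (w1 w2 : Fin d → ℝ) (v : Fin d → ℝ)
    (h : ∀ i ∈ S, |x i ⬝ᵥ w1 - x i ⬝ᵥ w2| ≤ 1/4) :
    v ⬝ᵥ (mnlHess S x w1) *ᵥ v ≤ Real.exp 1 * (v ⬝ᵥ (mnlHess S x w2) *ᵥ v) := by
  rw [mnlHess_quad, mnlHess_quad]
  obtain ⟨hpq, hpq0⟩ := mnlProb_ratio S x w1 w2 h
  have key := Q_le S (mnlProb S x w1) (mnlProb S x w2) (fun i => x i ⬝ᵥ v)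
    (Real.exp (1/2)) (Real.exp_nonneg _)
    (fun i _ => mnlProb_nonneg S x w1 i) (fun i _ => mnlProb_nonneg S x w2 i)
    (sum_mnlProb_le_one S x w2) hpq hpq0
  have hE : Real.exp (1/2) ^ 2 = Real.exp 1 := by rw [sq, ← Real.exp_add]; norm_num
  rw [hE] at key
  exact key

lemma quad_decomp {d : ℕ} (c : ℝ) (F : Finset ℕ) (M : ℕ → Matrix (Fin d) (Fin d) ℝ)
    (v : Fin d → ℝ) :
    v ⬝ᵥ (c • (1 : Matrix (Fin d) (Fin d) ℝ) + ∑ s ∈ F, M s) *ᵥ v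
      = c * (v ⬝ᵥ v) + ∑ s ∈ F, v ⬝ᵥ (M s) *ᵥ v := by
  rw [add_mulVec, dotProduct_add, smul_mulVec, one_mulVec, dotProduct_smul,
    sumMulVec, dotSum, smul_eq_mul]

lemma herm_decomp {d : ℕ} {ι : Type*} (c : ℝ) (F : Finset ℕ) (S : ℕ → Finset ι)
    (x : ℕ → ι → Fin d → ℝ) (wfun : ℕ → Fin d → ℝ) :
    (c • (1 : Matrix (Fin d) (Fin d) ℝ)
      + ∑ s ∈ F, mnlHess (S s) (x s) (wfun s)).IsHermitian := by
  have h1 : (c • (1 : Matrix (Fin d) (Fin d) ℝ)).IsHermitian := by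
    unfold Matrix.IsHermitian
    rw [conjTranspose_smul, conjTranspose_one]
    norm_num
  have h2 : (∑ s ∈ F, mnlHess (S s) (x s) (wfun s)).IsHermitian := by
    unfold Matrix.IsHermitian
    rw [conjTranspose_sum]
    exact Finset.sum_congr rfl fun s _ => mnlHess_isHermitian (S s) (x s) (wfun s)
  exact h1.add h2

lemma herm_smul {d : ℕ} (c : ℝ) {M : Matrix (Fin d) (Fin d) ℝ} (h : M.IsHermitian) :
    (c • M).IsHermitian := by
  unfold Matrix.IsHermitian at *
  rw [conjTranspose_smul, h]
  norm_num

/-- **Lemma D.6.** If for all `s ∈ [t−1]\𝒲` and `i ∈ S_s` we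
have `|x_{si}ᵀ(w_{s+1} − w*)| ≤ 1/(3√2)`, then with
`H_t = λ I + Σ_{s∈[t−1]\𝒲} ∇²ℓ_s(w_{s+1})` and
`H_t(w*) = (λ/e) I + Σ_{s∈[t−1]\𝒲} ∇²ℓ_s(w*)` we have
`(1/e) H_t(w*) ⪯ H_t ⪯ e H_t(w*)` (where `A ⪯ B` means `B − A` is PSD). -/
theorem mnl_hessian_matrix_comparison {d : ℕ} {ι : Type*} (lam : ℝ)
    (hlam : 0 < lam) (t : ℕ) (Wset : Finset ℕ) (hWset : Wset ⊆ Finset.Icc 1 (t - 1))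
    (S : ℕ → Finset ι) (x : ℕ → ι → Fin d → ℝ)
    (wseq : ℕ → Fin d → ℝ) (wstar : Fin d → ℝ)
    (halign : ∀ s ∈ Finset.Icc 1 (t - 1), s ∉ Wset →
      ∀ i ∈ S s, |x s i ⬝ᵥ (wseq (s + 1) - wstar)| ≤ 1 / (3 * Real.sqrt 2))
    (Ht Hstar : Matrix (Fin d) (Fin d) ℝ)
    (hHt : Ht = lam • (1 : Matrix (Fin d) (Fin d) ℝ)
      + ∑ s ∈ (Finset.Icc 1 (t - 1)).filter (fun s => s ∉ Wset),
          mnlHess (S s) (x s) (wseq (s + 1)))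
    (hHstar : Hstar = (lam / Real.exp 1) • (1 : Matrix (Fin d) (Fin d) ℝ)
      + ∑ s ∈ (Finset.Icc 1 (t - 1)).filter (fun s => s ∉ Wset),
          mnlHess (S s) (x s) wstar) :
    (Ht - (Real.exp 1)⁻¹ • Hstar).PosSemidef ∧
    (Real.exp 1 • Hstar - Ht).PosSemidef := by
  have hEpos : (0:ℝ) < Real.exp 1 := Real.exp_pos 1
  have hE1 : (1:ℝ) ≤ Real.exp 1 := by
    have := Real.add_one_le_exp (1:ℝ); linarith
  set F := (Finset.Icc 1 (t - 1)).filter (fun s => s ∉ Wset) with hF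
  have hkey : ∀ s ∈ F, ∀ i ∈ S s,
      |x s i ⬝ᵥ wseq (s + 1) - x s i ⬝ᵥ wstar| ≤ 1/4 := by
    intro s hs i hi
    obtain ⟨hs1, hs2⟩ := Finset.mem_filter.mp hs
    have h0 := halign s hs1 hs2 i hi
    rw [dotProduct_sub] at h0
    have hs2' : (0:ℝ) < Real.sqrt 2 := Real.sqrt_pos.mpr (by norm_num)
    have hsq : (4:ℝ) ≤ 3 * Real.sqrt 2 := by
      nlinarith [Real.sq_sqrt (by norm_num : (0:ℝ) ≤ 2), Real.sqrt_nonneg 2]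
    calc |x s i ⬝ᵥ wseq (s + 1) - x s i ⬝ᵥ wstar| ≤ 1 / (3 * Real.sqrt 2) := h0
      _ ≤ 1/4 := by
          rw [div_le_div_iff₀ (by linarith) (by norm_num)]; linarith
  have hkey' : ∀ s ∈ F, ∀ i ∈ S s,
      |x s i ⬝ᵥ wstar - x s i ⬝ᵥ wseq (s + 1)| ≤ 1/4 := fun s hs i hi => by
    rw [abs_sub_comm]; exact hkey s hs i hi
  have hvv : ∀ v : Fin d → ℝ, 0 ≤ v ⬝ᵥ v := fun v =>
    Finset.sum_nonneg fun i _ => mul_self_nonneg (v i)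
  have hHermHt : Ht.IsHermitian := by rw [hHt]; exact herm_decomp _ _ _ _ _
  have hHermHs : Hstar.IsHermitian := by rw [hHstar]; exact herm_decomp _ _ _ _ _
  have hQt : ∀ v : Fin d → ℝ, v ⬝ᵥ Ht *ᵥ v
      = lam * (v ⬝ᵥ v) + ∑ s ∈ F, v ⬝ᵥ (mnlHess (S s) (x s) (wseq (s + 1))) *ᵥ v := by
    intro v; rw [hHt]; exact quad_decomp _ _ _ _
  have hQs : ∀ v : Fin d → ℝ, v ⬝ᵥ Hstar *ᵥ v
      = (lam / Real.exp 1) * (v ⬝ᵥ v) + ∑ s ∈ F, v ⬝ᵥ (mnlHess (S s) (x s) wstar) *ᵥ v := by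
    intro v; rw [hHstar]; exact quad_decomp _ _ _ _
  constructor
  · refine posSemidef_iff_dotProduct_mulVec.mpr ⟨hHermHt.sub (herm_smul _ hHermHs), fun v => ?_⟩
    rw [star_trivial, sub_mulVec, dotProduct_sub, smul_mulVec, dotProduct_smul,
      smul_eq_mul, hQt, hQs]
    have hsum : ∑ s ∈ F, v ⬝ᵥ (mnlHess (S s) (x s) wstar) *ᵥ v
        ≤ Real.exp 1 * ∑ s ∈ F, v ⬝ᵥ (mnlHess (S s) (x s) (wseq (s + 1))) *ᵥ v := by
      rw [Finset.mul_sum]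
      exact Finset.sum_le_sum fun s hs =>
        mnlHess_quad_le (S s) (x s) wstar (wseq (s + 1)) v (hkey' s hs)
    have h1 : (Real.exp 1)⁻¹ * ((lam / Real.exp 1) * (v ⬝ᵥ v)) ≤ lam * (v ⬝ᵥ v) := by
      have hi : (Real.exp 1)⁻¹ ≤ 1 := inv_le_one_of_one_le₀ hE1
      have hin : (0:ℝ) ≤ (Real.exp 1)⁻¹ := inv_nonneg.mpr hEpos.le
      have hc : (Real.exp 1)⁻¹ * (lam / Real.exp 1) ≤ lam := by
        rw [div_eq_mul_inv]
        nlinarith [mul_le_mul hi hi hin zero_le_one,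
          mul_le_mul_of_nonneg_left (mul_le_mul hi hi hin zero_le_one) hlam.le]
      calc (Real.exp 1)⁻¹ * ((lam / Real.exp 1) * (v ⬝ᵥ v))
          = ((Real.exp 1)⁻¹ * (lam / Real.exp 1)) * (v ⬝ᵥ v) := by ring
        _ ≤ lam * (v ⬝ᵥ v) := mul_le_mul_of_nonneg_right hc (hvv v)
    have h2 : (Real.exp 1)⁻¹ * ∑ s ∈ F, v ⬝ᵥ (mnlHess (S s) (x s) wstar) *ᵥ v
        ≤ ∑ s ∈ F, v ⬝ᵥ (mnlHess (S s) (x s) (wseq (s + 1))) *ᵥ v := by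
      rw [inv_mul_le_iff₀ hEpos]
      exact hsum
    have hma := mul_add (Real.exp 1)⁻¹ ((lam / Real.exp 1) * (v ⬝ᵥ v))
      (∑ s ∈ F, v ⬝ᵥ (mnlHess (S s) (x s) wstar) *ᵥ v)
    linarith
  · refine posSemidef_iff_dotProduct_mulVec.mpr ⟨(herm_smul _ hHermHs).sub hHermHt, fun v => ?_⟩
    rw [star_trivial, sub_mulVec, dotProduct_sub, smul_mulVec, dotProduct_smul,
      smul_eq_mul, hQt, hQs]
    have hsum : ∑ s ∈ F, v ⬝ᵥ (mnlHess (S s) (x s) (wseq (s + 1))) *ᵥ v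
        ≤ Real.exp 1 * ∑ s ∈ F, v ⬝ᵥ (mnlHess (S s) (x s) wstar) *ᵥ v := by
      rw [Finset.mul_sum]
      exact Finset.sum_le_sum fun s hs =>
        mnlHess_quad_le (S s) (x s) (wseq (s + 1)) wstar v (hkey s hs)
    have heq2 : Real.exp 1 * ((lam / Real.exp 1) * (v ⬝ᵥ v)) = lam * (v ⬝ᵥ v) := by
      field_simp
    have hma := mul_add (Real.exp 1) ((lam / Real.exp 1) * (v ⬝ᵥ v))
      (∑ s ∈ F, v ⬝ᵥ (mnlHess (S s) (x s) wstar) *ᵥ v)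
    linarith [hsum, hma, heq2]
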